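/- For n_c ≥ 2, K ≥ 1, L ≥ 1, λ > 0, and η > 0, the function H(t) = log(1 − K/n_c^L + (K/n_c^L)(1 + (n_c−1)e^{−ηt})^L) + λt, defined for t ≥ 0, is strictly convex and has a unique minimizer on [0,∞), provided K ≤ n_c^L. -/

import Mathlib

open Real Set

private lemma auxDeriv (A r t : ℝ) :
    HasDerivAt (fun u : ℝ => A * Real.exp (r * u)) (A * r * Real.exp (r * t)) t := by
  have h1 : HasDerivAt (fun u : ℝ => r * u) r t := by
    simpa using (hasDerivAt_id t).const_mul r
  have h2 := (h1.exp).const_mul A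
  refine h2.congr_deriv ?_
  ring

/-- generalized log-sum-exp building blocks -/
noncomputable def Fs (L : ℕ) (v r : ℕ → ℝ) : ℝ → ℝ :=
  fun t => ∑ j ∈ Finset.range (L + 1), v j * Real.exp (r j * t)

noncomputable def Fs1 (L : ℕ) (v r : ℕ → ℝ) : ℝ → ℝ :=
  fun t => ∑ j ∈ Finset.range (L + 1), (v j * r j) * Real.exp (r j * t)

noncomputable def Fs2 (L : ℕ) (v r : ℕ → ℝ) : ℝ → ℝ :=
  fun t => ∑ j ∈ Finset.range (L + 1), (v j * r j * r j) * Real.exp (r j * t)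

private lemma Fs_hasDeriv (L : ℕ) (v r : ℕ → ℝ) (t : ℝ) :
    HasDerivAt (Fs L v r) (Fs1 L v r t) t := by
  show HasDerivAt (fun u : ℝ => ∑ j ∈ Finset.range (L + 1), v j * Real.exp (r j * u))
    (∑ j ∈ Finset.range (L + 1), (v j * r j) * Real.exp (r j * t)) t
  exact HasDerivAt.fun_sum fun j _ => auxDeriv (v j) (r j) t

private lemma Fs1_hasDeriv (L : ℕ) (v r : ℕ → ℝ) (t : ℝ) :
    HasDerivAt (Fs1 L v r) (Fs2 L v r t) t := by
  show HasDerivAt (fun u : ℝ => ∑ j ∈ Finset.range (L + 1), (v j * r j) * Real.exp (r j * u))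
    (∑ j ∈ Finset.range (L + 1), (v j * r j * r j) * Real.exp (r j * t)) t
  exact HasDerivAt.fun_sum fun j _ => auxDeriv (v j * r j) (r j) t

private lemma key_ineq (L : ℕ) (hL : 1 ≤ L) (v r : ℕ → ℝ)
    (hv : ∀ j, j < L + 1 → 0 < v j) (hr0 : r 0 = 0) (hr : ∀ j, 1 ≤ j → r j ≠ 0) (t : ℝ) :
    (Fs1 L v r t) ^ 2 < Fs2 L v r t * Fs L v r t := by
  unfold Fs Fs1 Fs2
  rw [Finset.sum_range_succ' _ L, Finset.sum_range_succ' _ L, Finset.sum_range_succ' _ L, hr0]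
  simp only [mul_zero, zero_mul, zero_add, add_zero, Real.exp_zero, mul_one]
  set a : ℕ → ℝ := fun i => Real.sqrt (v (i + 1) * Real.exp (r (i + 1) * t)) with ha
  set g : ℕ → ℝ := fun i => r (i + 1) * a i with hg
  have hmem : ∀ i ∈ Finset.range L, 0 ≤ v (i + 1) * Real.exp (r (i + 1) * t) := by
    intro i hi
    have := hv (i + 1) (by have := Finset.mem_range.mp hi; omega)
    positivity
  have h1 : (∑ i ∈ Finset.range L, (v (i + 1) * r (i + 1)) * Real.exp (r (i + 1) * t))
      = ∑ i ∈ Finset.range L, a i * g i := by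
    refine Finset.sum_congr rfl fun i hi => ?_
    have hnn := hmem i hi
    simp only [ha, hg]
    rw [show Real.sqrt (v (i + 1) * Real.exp (r (i + 1) * t)) *
        (r (i + 1) * Real.sqrt (v (i + 1) * Real.exp (r (i + 1) * t)))
      = r (i + 1) * (Real.sqrt (v (i + 1) * Real.exp (r (i + 1) * t)) *
        Real.sqrt (v (i + 1) * Real.exp (r (i + 1) * t))) by ring,
      Real.mul_self_sqrt hnn]
    ring
  have h2 : (∑ i ∈ Finset.range L, (v (i + 1) * r (i + 1) * r (i + 1)) * Real.exp (r (i + 1) * t))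
      = ∑ i ∈ Finset.range L, g i ^ 2 := by
    refine Finset.sum_congr rfl fun i hi => ?_
    have hnn := hmem i hi
    simp only [ha, hg]
    rw [mul_pow, Real.sq_sqrt hnn]
    ring
  have h3 : (∑ i ∈ Finset.range L, v (i + 1) * Real.exp (r (i + 1) * t))
      = ∑ i ∈ Finset.range L, a i ^ 2 := by
    refine Finset.sum_congr rfl fun i hi => ?_
    rw [Real.sq_sqrt (hmem i hi)]
  rw [h1, h2, h3]
  have hCS := Finset.sum_mul_sq_le_sq_mul_sq (Finset.range L) a g
  have hg2pos : 0 < ∑ i ∈ Finset.range L, g i ^ 2 := by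
    rw [← h2]
    refine Finset.sum_pos (fun i hi => ?_) ⟨0, Finset.mem_range.mpr (by omega)⟩
    have h5 : 0 < r (i + 1) * r (i + 1) := mul_self_pos.2 (hr (i + 1) (by omega))
    have h6 := hv (i + 1) (by have := Finset.mem_range.mp hi; omega)
    have h7 := Real.exp_pos (r (i + 1) * t)
    have h8 := mul_pos (mul_pos h6 h5) h7
    linarith [h8]
  have ha2nn : 0 ≤ ∑ i ∈ Finset.range L, a i ^ 2 :=
    Finset.sum_nonneg fun i _ => sq_nonneg _
  have hv0 := hv 0 (by omega)
  nlinarith [mul_pos hg2pos hv0]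

private lemma aux_main (L : ℕ) (hL : 1 ≤ L) (v r : ℕ → ℝ)
    (hv : ∀ j, j < L + 1 → 0 < v j) (hv0 : (1 : ℝ) ≤ v 0)
    (hr0 : r 0 = 0) (hr : ∀ j, 1 ≤ j → r j ≠ 0)
    (lam : ℝ) (hlam : 0 < lam) (H : ℝ → ℝ)
    (hH : ∀ t, H t = Real.log (Fs L v r t) + lam * t) :
    StrictConvexOn ℝ (Set.Ici 0) H ∧
      ∃! t : ℝ, t ∈ Set.Ici (0 : ℝ) ∧ ∀ s ∈ Set.Ici (0 : ℝ), H t ≤ H s := by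
  have hHf : H = fun t => Real.log (Fs L v r t) + lam * t := funext hH
  have hFpos : ∀ t, 0 < Fs L v r t := by
    intro t
    refine Finset.sum_pos (fun j hj => ?_) ⟨0, Finset.mem_range.mpr (by omega)⟩
    exact mul_pos (hv j (Finset.mem_range.mp hj)) (Real.exp_pos _)
  have hFone : ∀ t, 1 ≤ Fs L v r t := by
    intro t
    have h0 : v 0 * Real.exp (r 0 * t) = v 0 := by rw [hr0]; simp
    calc (1 : ℝ) ≤ v 0 := hv0
      _ = v 0 * Real.exp (r 0 * t) := h0.symm
      _ ≤ Fs L v r t := by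
          have h0m : 0 ∈ Finset.range (L + 1) := Finset.mem_range.mpr (Nat.succ_pos L)
          exact Finset.single_le_sum (f := fun j => v j * Real.exp (r j * t))
            (fun j hj => le_of_lt (mul_pos (hv j (Finset.mem_range.mp hj)) (Real.exp_pos _))) h0m
  have hHd : ∀ t, HasDerivAt H (Fs1 L v r t / Fs L v r t + lam) t := by
    intro t
    rw [hHf]
    have hg : HasDerivAt (fun y : ℝ => lam * y) lam t := by
      simpa using (hasDerivAt_id t).const_mul lam
    exact (((Fs_hasDeriv L v r t).log (hFpos t).ne')).add hg
  have hderivH : deriv H = fun t => Fs1 L v r t / Fs L v r t + lam :=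
    funext fun t => (hHd t).deriv
  have hHd2 : ∀ t, HasDerivAt (deriv H)
      ((Fs2 L v r t * Fs L v r t - Fs1 L v r t * Fs1 L v r t) / (Fs L v r t) ^ 2) t := by
    intro t
    rw [hderivH]
    exact ((Fs1_hasDeriv L v r t).div (Fs_hasDeriv L v r t) (hFpos t).ne').add_const lam
  have h2pos : ∀ x : ℝ, 0 < deriv (deriv H) x := by
    intro x
    rw [(hHd2 x).deriv]
    apply div_pos
    · have := key_ineq L hL v r hv hr0 hr x
      nlinarith
    · exact pow_pos (hFpos x) 2
  have hcontH : Continuous H :=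
    continuous_iff_continuousAt.mpr fun x => (hHd x).differentiableAt.continuousAt
  have hconv : StrictConvexOn ℝ (Set.Ici 0) H := by
    refine strictConvexOn_of_deriv2_pos (convex_Ici 0) hcontH.continuousOn fun x _ => ?_
    show 0 < deriv (deriv H) x
    exact h2pos x
  have hlb : ∀ t, lam * t ≤ H t := by
    intro t
    rw [hH t]
    have := Real.log_nonneg (hFone t)
    linarith
  have hH00 : 0 ≤ H 0 := by simpa using hlb 0
  have hT0 : 0 ≤ H 0 / lam := div_nonneg hH00 hlam.le
  obtain ⟨t₀, ht₀m, ht₀⟩ := (isCompact_Icc (a := (0 : ℝ)) (b := H 0 / lam)).exists_isMinOn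
    (Set.nonempty_Icc.mpr hT0) hcontH.continuousOn
  have hmin : ∀ s ∈ Set.Ici (0 : ℝ), H t₀ ≤ H s := by
    intro s hs
    rcases le_or_gt s (H 0 / lam) with h | h
    · exact isMinOn_iff.mp ht₀ s ⟨hs, h⟩
    · have h1 : H t₀ ≤ H 0 := isMinOn_iff.mp ht₀ 0 ⟨le_refl 0, hT0⟩
      have h3 : lam * (H 0 / lam) = H 0 := by field_simp
      have h2 : lam * (H 0 / lam) ≤ lam * s := mul_le_mul_of_nonneg_left h.le hlam.le
      have := hlb s
      linarith
  refine ⟨hconv, t₀, ⟨ht₀m.1, hmin⟩, ?_⟩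
  rintro y ⟨hy, hymin⟩
  exact hconv.eq_of_isMinOn (isMinOn_iff.mpr hymin) (isMinOn_iff.mpr hmin) hy ht₀m.1

theorem H_strictConvex_unique_min (n_c K L : ℕ) (hn : 2 ≤ n_c) (hK : 1 ≤ K) (hL : 1 ≤ L)
    (hKn : K ≤ n_c ^ L) (lam η : ℝ) (hlam : 0 < lam) (hη : 0 < η)
    (H : ℝ → ℝ)
    (hH : ∀ t, H t =
      Real.log (1 - (K : ℝ) / n_c ^ L +
        ((K : ℝ) / n_c ^ L) * (1 + ((n_c : ℝ) - 1) * Real.exp (-η * t)) ^ L) + lam * t) :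
    StrictConvexOn ℝ (Set.Ici 0) H ∧
    ∃! t : ℝ, t ∈ Set.Ici (0 : ℝ) ∧ ∀ s ∈ Set.Ici (0 : ℝ), H t ≤ H s := by
  have hn2 : (2 : ℝ) ≤ (n_c : ℝ) := by exact_mod_cast hn
  have hnL : (0 : ℝ) < (n_c : ℝ) ^ L := by positivity
  have hb : (0 : ℝ) < (K : ℝ) / (n_c : ℝ) ^ L := by
    apply div_pos _ hnL
    exact_mod_cast Nat.lt_of_lt_of_le Nat.zero_lt_one hK
  have hc : (1 : ℝ) ≤ (n_c : ℝ) - 1 := by linarith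
  set b : ℝ := (K : ℝ) / (n_c : ℝ) ^ L with hbdef
  set c : ℝ := (n_c : ℝ) - 1 with hcdef
  refine aux_main L hL
    (fun j => b * (L.choose j : ℝ) * c ^ j + if j = 0 then 1 - b else 0)
    (fun j => -((j : ℝ) * η)) ?_ ?_ (by norm_num) ?_ lam hlam H ?_
  · intro j hj
    rcases Nat.eq_zero_or_pos j with h | h
    · subst h; norm_num
    · have h1 : (0 : ℝ) < (L.choose j : ℝ) := by
        exact_mod_cast Nat.choose_pos (by omega : j ≤ L)
      have h2 : (0 : ℝ) < c := by linarith
      have : j ≠ 0 := by omega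
      simp only [this, if_false, add_zero]
      positivity
  · norm_num
  · intro j hj
    have : (0 : ℝ) < (j : ℝ) * η := by
      have : (1 : ℝ) ≤ (j : ℝ) := by exact_mod_cast hj
      nlinarith
    intro hcon
    rw [neg_eq_zero] at hcon
    linarith [hcon ▸ this]
  · intro t
    rw [hH t]
    congr 1
    congr 1
    unfold Fs
    have hpowL : (1 + c * Real.exp (-η * t)) ^ L
        = ∑ j ∈ Finset.range (L + 1),
            (c * Real.exp (-η * t)) ^ j * (L.choose j : ℝ) := by
      rw [add_comm (1 : ℝ) (c * Real.exp (-η * t))]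
      simpa using add_pow (c * Real.exp (-η * t)) 1 L
    rw [hpowL, Finset.mul_sum]
    have hterm : ∀ j ∈ Finset.range (L + 1),
        b * ((c * Real.exp (-η * t)) ^ j * (L.choose j : ℝ))
          = (b * (L.choose j : ℝ) * c ^ j) * Real.exp (-((j : ℝ) * η) * t) := by
      intro j _
      have hexp : Real.exp (-((j : ℝ) * η) * t) = Real.exp (-η * t) ^ j := by
        rw [← Real.exp_nat_mul]
        congr 1
        ring
      rw [hexp, mul_pow]
      ring
    rw [Finset.sum_congr rfl hterm]
    have hsplit : ∑ j ∈ Finset.range (L + 1),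
        (b * (L.choose j : ℝ) * c ^ j + if j = 0 then 1 - b else 0) *
          Real.exp (-((j : ℝ) * η) * t)
        = (∑ j ∈ Finset.range (L + 1),
            (b * (L.choose j : ℝ) * c ^ j) * Real.exp (-((j : ℝ) * η) * t)) + (1 - b) := by
      have h1 : ∀ j ∈ Finset.range (L + 1),
          (b * (L.choose j : ℝ) * c ^ j + if j = 0 then 1 - b else 0) *
            Real.exp (-((j : ℝ) * η) * t)
          = (b * (L.choose j : ℝ) * c ^ j) * Real.exp (-((j : ℝ) * η) * t)
            + (if j = 0 then (1 - b) * Real.exp (-((j : ℝ) * η) * t) else 0) := by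
        intro j _
        rw [add_mul, ite_mul, zero_mul]
      rw [Finset.sum_congr rfl h1, Finset.sum_add_distrib]
      congr 1
      rw [Finset.sum_ite_eq' (Finset.range (L + 1)) 0
        (fun j => (1 - b) * Real.exp (-((j : ℝ) * η) * t))]
      simp
    rw [hsplit]
    ring
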